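/- Let Γ be a finite connected simplicial graph with no SIL whose vertices are labeled by nontrivial cyclic groups. Then the homomorphism f̃: G_{Γ₀} → G_{Γ̃} determined by v ↦ p_v is injective. -/

import Mathlib

open Monoid

namespace ArXiv

universe u uG

variable {V : Type u}

/-- The star of a vertex: the vertex together with its neighbors. -/
def star (Γ : SimpleGraph V) (v : V) : Set V := insert v (Γ.neighborSet v)

/-- `C ⊆ V` is the vertex set of a connected component of the full subgraph of `Γ`
induced on `S`. -/
def IsCompOf (Γ : SimpleGraph V) (S : Set V) (C : Set V) : Prop :=
  ∃ c : (Γ.induce S).ConnectedComponent, C = Subtype.val '' c.supp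

/-- `Γ` has a separating intersection of links: there are distinct non-adjacent vertices
`v, w` such that some connected component of `Γ ∖ (lk(v) ∩ lk(w))` contains neither `v`
nor `w`. -/
def HasSIL (Γ : SimpleGraph V) : Prop :=
  ∃ v w : V, v ≠ w ∧ ¬ Γ.Adj v w ∧
    ∃ C : Set V, IsCompOf Γ ((Γ.neighborSet v ∩ Γ.neighborSet w)ᶜ) C ∧ v ∉ C ∧ w ∉ C

variable (Γ : SimpleGraph V) (G : V → Type uG) [∀ v, Group (G v)]

/-- The commutator relators defining the graph product. -/
def rels : Set (Monoid.CoprodI G) :=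
  {x | ∃ (v w : V) (_ : Γ.Adj v w) (g : G v) (h : G w),
    x = CoprodI.of g * CoprodI.of h * (CoprodI.of g)⁻¹ * (CoprodI.of h)⁻¹}

/-- The graph product of the vertex groups `G v` over the graph `Γ`: the quotient of the
free product by the normal closure of the commutators of adjacent vertex groups. -/
def GraphProduct : Type (max u uG) :=
  Monoid.CoprodI G ⧸ Subgroup.normalClosure (rels Γ G)

instance : Group (GraphProduct Γ G) :=
  inferInstanceAs (Group (Monoid.CoprodI G ⧸ Subgroup.normalClosure (rels Γ G)))

/-- The canonical map from a vertex group into the graph product. -/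
def of {v : V} : G v →* GraphProduct Γ G :=
  (QuotientGroup.mk' (Subgroup.normalClosure (rels Γ G))).comp CoprodI.of

theorem of_commute {v w : V} (h : Γ.Adj v w) (g : G v) (k : G w) :
    Commute (of Γ G g) (of Γ G k) := by
  rw [← commutatorElement_eq_one_iff_commute]
  have hmem : (CoprodI.of g * CoprodI.of k * (CoprodI.of g)⁻¹ * (CoprodI.of k)⁻¹ :
      Monoid.CoprodI G) ∈ Subgroup.normalClosure (rels Γ G) :=
    Subgroup.subset_normalClosure ⟨v, w, h, g, k, rfl⟩
  have h1 : (QuotientGroup.mk' (Subgroup.normalClosure (rels Γ G)))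
      (CoprodI.of g * CoprodI.of k * (CoprodI.of g)⁻¹ * (CoprodI.of k)⁻¹) = 1 :=
    (QuotientGroup.eq_one_iff _).mpr hmem
  simp only [map_mul, map_inv] at h1
  rw [commutatorElement_def]
  exact h1

/-- `π` is the partial conjugation `π_{v,C}`, for vertex groups with chosen generators
`gen`: it conjugates the generators in `C` by (the generator of) `v` and fixes all other
generators. -/
def IsPartialConj (gen : ∀ v, G v) (π : MulAut (GraphProduct Γ G)) (v : V) (C : Set V) :
    Prop :=
  (∀ u ∈ C, ∀ g : G u, π (of Γ G g) = of Γ G (gen v) * of Γ G g * (of Γ G (gen v))⁻¹) ∧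
  (∀ u ∉ C, ∀ g : G u, π (of Γ G g) = of Γ G g)

/-- `π` is the partial conjugation `π_{a,C}` by the element `a` of the vertex group `G v`:
it conjugates the vertex groups in `C` by `a` and fixes all other vertex groups. -/
def IsPartialConjBy {v : V} (a : G v) (π : MulAut (GraphProduct Γ G)) (C : Set V) : Prop :=
  (∀ u ∈ C, ∀ g : G u, π (of Γ G g) = of Γ G a * of Γ G g * (of Γ G a)⁻¹) ∧
  (∀ u ∉ C, ∀ g : G u, π (of Γ G g) = of Γ G g)

/-- The vertex set of the graph `Γ̃`: pairs `p_{v,C}` where `C` is a connected component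
of `Γ ∖ st(v)`. -/
def TV : Type u := {p : V × Set V // IsCompOf Γ ((star Γ p.1)ᶜ) p.2}

/-- The graph `Γ̃`: vertices `p_{v,C}` and `p_{w,D}` are joined by an edge unless
`v, w` are distinct non-adjacent vertices with `v ∈ D` and `w ∈ C`. -/
def tilde : SimpleGraph (TV Γ) where
  Adj p q := p ≠ q ∧
    ¬(p.1.1 ≠ q.1.1 ∧ ¬ Γ.Adj p.1.1 q.1.1 ∧ p.1.1 ∈ q.1.2 ∧ q.1.1 ∈ p.1.2)
  symm := ⟨by
    rintro p q ⟨h1, h2⟩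
    exact ⟨h1.symm, fun ⟨a, b, c, d⟩ => h2 ⟨a.symm, fun e => b e.symm, d, c⟩⟩⟩
  loopless := ⟨fun p h => h.1 rfl⟩

/-- The graph product `G_{Γ̃}`, where the vertex `p_{v,C}` is labeled by (a copy of) the
group `G v`. -/
abbrev TildeProduct : Type (max u uG) :=
  GraphProduct (tilde Γ) (fun p : TV Γ => G p.1.1)

/-- The element `p_v = ∏_C p_{v,C} ∈ G_{Γ̃}`, the product over all connected components
`C` of `Γ ∖ st(v)` (the factors pairwise commute). -/
noncomputable def pvert [Finite V] (gen : ∀ v, G v) (v : V) : TildeProduct Γ G :=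
  haveI : Fintype {C : Set V // IsCompOf Γ ((star Γ v)ᶜ) C} := Fintype.ofFinite _
  Finset.noncommProd (Finset.univ : Finset {C : Set V // IsCompOf Γ ((star Γ v)ᶜ) C})
    (fun c => of (tilde Γ) (fun p : TV Γ => G p.1.1) (v := ⟨(v, c.1), c.2⟩) (gen v))
    (by
      intro a _ b _ hab
      have hadj : (tilde Γ).Adj ⟨(v, a.1), a.2⟩ ⟨(v, b.1), b.2⟩ := by
        refine ⟨fun h => hab (Subtype.ext (congrArg (fun x : TV Γ => x.1.2) h)), ?_⟩
        rintro ⟨hne, -⟩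
        exact hne rfl
      exact of_commute (tilde Γ) (fun p : TV Γ => G p.1.1) hadj (gen v) (gen v))

/-- The set `Δ` of vertices adjacent to every other vertex of `Γ`. -/
def Delta (Γ : SimpleGraph V) : Set V := {v | ∀ u, u ≠ v → Γ.Adj v u}

/-- The subgroup of the graph product generated by the vertex groups `G v`, `v ∈ T`. -/
def vertexSubgroup (T : Set V) : Subgroup (GraphProduct Γ G) :=
  Subgroup.closure {x | ∃ v ∈ T, ∃ g : G v, x = of Γ G g}

/-- `w` is a reduced word for the element `g` of the graph product: a minimal length
expression of `g` as a product of nontrivial elements of vertex groups. -/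
def IsReducedWord (g : GraphProduct Γ G) (w : List (Σ v : V, G v)) : Prop :=
  (w.map fun l => of Γ G l.2).prod = g ∧ (∀ l ∈ w, l.2 ≠ 1) ∧
    ∀ w' : List (Σ v : V, G v), (w'.map fun l => of Γ G l.2).prod = g →
      w.length ≤ w'.length

section Infra

variable {W : Type*} {H : Type*} [Group H]

/-- Universal property of the graph product. -/
noncomputable def liftHom (Γ' : SimpleGraph W) (G' : W → Type*) [∀ v, Group (G' v)]
    (φ : ∀ v, G' v →* H)
    (hcomm : ∀ v w, Γ'.Adj v w → ∀ g k, Commute (φ v g) (φ w k)) :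
    GraphProduct Γ' G' →* H :=
  QuotientGroup.lift _ (CoprodI.lift φ) (by
    have hle : Subgroup.normalClosure (rels Γ' G') ≤ (CoprodI.lift φ).ker :=
      Subgroup.normalClosure_le_normal (by
        rintro y ⟨v, w, hadj, g, k, rfl⟩
        simp only [SetLike.mem_coe, MonoidHom.mem_ker, map_mul, map_inv, CoprodI.lift_of]
        exact commutatorElement_eq_one_iff_commute.mpr (hcomm v w hadj g k))
    exact hle)

theorem liftHom_of {Γ' : SimpleGraph W} {G' : W → Type*} [∀ v, Group (G' v)]
    {φ : ∀ v, G' v →* H} {hcomm : ∀ v w, Γ'.Adj v w → ∀ g k, Commute (φ v g) (φ w k)}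
    {v : W} (g : G' v) :
    liftHom Γ' G' φ hcomm (of Γ' G' g) = φ v g := by
  show QuotientGroup.lift _ (CoprodI.lift φ) _
      ((QuotientGroup.mk' (Subgroup.normalClosure (rels Γ' G'))).comp CoprodI.of g) = φ v g
  rw [MonoidHom.comp_apply, QuotientGroup.mk'_apply, QuotientGroup.lift_mk, CoprodI.lift_of]

theorem hom_ext {Γ' : SimpleGraph W} {G' : W → Type*} [∀ v, Group (G' v)]
    {f₁ f₂ : GraphProduct Γ' G' →* H}
    (h : ∀ (v : W) (g : G' v), f₁ (of Γ' G' g) = f₂ (of Γ' G' g)) : f₁ = f₂ := by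
  have hs : Function.Surjective (QuotientGroup.mk' (Subgroup.normalClosure (rels Γ' G'))) :=
    QuotientGroup.mk'_surjective _
  refine (MonoidHom.cancel_right hs).mp ?_
  refine CoprodI.ext_hom _ _ fun v => MonoidHom.ext fun g => ?_
  exact h v g

theorem of_comm_of_zpowers {Γ' : SimpleGraph W} {G' : W → Type*} [∀ v, Group (G' v)] {v : W}
    {g₀ : G' v} (hg : ∀ x : G' v, x ∈ Subgroup.zpowers g₀) (g k : G' v) :
    Commute (of Γ' G' g) (of Γ' G' k) := by
  obtain ⟨m, rfl⟩ := Subgroup.mem_zpowers_iff.mp (hg g)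
  obtain ⟨n, rfl⟩ := Subgroup.mem_zpowers_iff.mp (hg k)
  have h := (Commute.refl (of Γ' G' g₀)).zpow_zpow m n
  simpa [← map_zpow] using h

end Infra

section Comp

variable {Γ : SimpleGraph V} {S C D K : Set V} {x y v w : V}

theorem IsCompOf.subset (h : IsCompOf Γ S C) : C ⊆ S := by
  obtain ⟨c, rfl⟩ := h
  rintro x ⟨y, -, rfl⟩
  exact y.2

theorem IsCompOf.nonempty (h : IsCompOf Γ S C) : C.Nonempty := by
  obtain ⟨c, rfl⟩ := h
  obtain ⟨a, ha⟩ := Quot.exists_rep c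
  exact ⟨a.1, a, ha, rfl⟩

theorem IsCompOf.mem_of_adj (h : IsCompOf Γ S C) (hx : x ∈ C) (hy : y ∈ S)
    (hadj : Γ.Adj x y) : y ∈ C := by
  obtain ⟨c, rfl⟩ := h
  obtain ⟨⟨x, hxS⟩, hxc, rfl⟩ := hx
  refine ⟨⟨y, hy⟩, ?_, rfl⟩
  rw [SimpleGraph.ConnectedComponent.mem_supp_iff] at hxc ⊢
  rw [← hxc]
  exact SimpleGraph.ConnectedComponent.connectedComponentMk_eq_of_adj
    (by exact hadj.symm : (Γ.induce S).Adj ⟨y, hy⟩ ⟨x, hxS⟩)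

theorem IsCompOf.eq_of_mem (h1 : IsCompOf Γ S C) (h2 : IsCompOf Γ S D)
    (hx1 : x ∈ C) (hx2 : x ∈ D) : C = D := by
  obtain ⟨c, rfl⟩ := h1
  obtain ⟨d, rfl⟩ := h2
  obtain ⟨⟨x, hxS⟩, hxc, rfl⟩ := hx1
  obtain ⟨x', hxd, hxx⟩ := hx2
  have hx' : x' = (⟨x, hxS⟩ : ↥S) := Subtype.ext hxx
  rw [SimpleGraph.ConnectedComponent.mem_supp_iff] at hxc hxd
  rw [hx'] at hxd
  rw [← hxc, ← hxd]

theorem exists_isCompOf_mem (Γ : SimpleGraph V) (hx : x ∈ S) : ∃ C, IsCompOf Γ S C ∧ x ∈ C :=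
  ⟨_, ⟨(Γ.induce S).connectedComponentMk ⟨x, hx⟩, rfl⟩, ⟨⟨x, hx⟩, rfl, rfl⟩⟩

theorem IsCompOf.exists_reach (h : IsCompOf Γ S C) (hx : x ∈ C) (hy : y ∈ C) :
    ∃ (hx' : x ∈ S) (hy' : y ∈ S), (Γ.induce S).Reachable ⟨x, hx'⟩ ⟨y, hy'⟩ := by
  obtain ⟨c, rfl⟩ := h
  obtain ⟨⟨x, hxS⟩, hxc, rfl⟩ := hx
  obtain ⟨⟨y, hyS⟩, hyc, rfl⟩ := hy
  rw [SimpleGraph.ConnectedComponent.mem_supp_iff] at hxc hyc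
  exact ⟨hxS, hyS, SimpleGraph.ConnectedComponent.exact (hxc.trans hyc.symm)⟩

theorem IsCompOf.mem_of_reachable (h : IsCompOf Γ S C) (hx : x ∈ C) {hx' : x ∈ S} {hy' : y ∈ S}
    (hr : (Γ.induce S).Reachable ⟨x, hx'⟩ ⟨y, hy'⟩) : y ∈ C := by
  obtain ⟨c, rfl⟩ := h
  obtain ⟨⟨x, hxS⟩, hxc, rfl⟩ := hx
  refine ⟨⟨y, hy'⟩, ?_, rfl⟩
  rw [SimpleGraph.ConnectedComponent.mem_supp_iff] at hxc ⊢
  have : (⟨x, hx'⟩ : ↥S) = ⟨x, hxS⟩ := rfl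
  rw [← hxc]
  exact SimpleGraph.ConnectedComponent.sound hr.symm

theorem mem_star_compl : x ∈ (star Γ v)ᶜ ↔ x ≠ v ∧ ¬ Γ.Adj v x := by
  simp [star, Set.mem_compl_iff, Set.mem_insert_iff, not_or]

theorem nonempty_star_compl (h : v ∉ Delta Γ) : ((star Γ v)ᶜ : Set V).Nonempty := by
  simp only [Delta, Set.mem_setOf_eq, not_forall] at h
  obtain ⟨u, hu1, hu2⟩ := h
  exact ⟨u, mem_star_compl.mpr ⟨hu1, hu2⟩⟩

end Comp
section Combinatorics

variable {Γ : SimpleGraph V} {S C D K P Q : Set V} {x y v w : V}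

private theorem master_aux (hvw : v ≠ w) (hn : ¬ Γ.Adj v w)
    (hP : IsCompOf Γ ((star Γ v)ᶜ) P) (hQ : IsCompOf Γ ((star Γ w)ᶜ) Q)
    {a b : ↥((Γ.neighborSet v ∩ Γ.neighborSet w)ᶜ)}
    (p : (Γ.induce ((Γ.neighborSet v ∩ Γ.neighborSet w)ᶜ)).Walk a b) :
    (a : V) ∈ P → (a : V) ∈ Q → ((b : V) = v ∨ (b : V) = w) → w ∈ P ∨ v ∈ Q := by
  induction p with
  | nil =>
    intro haP haQ hb
    exfalso
    rcases hb with hb | hb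
    · exact (mem_star_compl.mp (hP.subset (hb ▸ haP))).1 rfl
    · exact (mem_star_compl.mp (hQ.subset (hb ▸ haQ))).1 rfl
  | @cons a c b hac q ih =>
    intro haP haQ hb
    have hadj : Γ.Adj (a : V) (c : V) := hac
    have hcmem : (c : V) ∉ Γ.neighborSet v ∩ Γ.neighborSet w := c.2
    have hvQmem : v ∈ (star Γ w)ᶜ := mem_star_compl.mpr ⟨hvw, fun h => hn h.symm⟩
    have hwPmem : w ∈ (star Γ v)ᶜ := mem_star_compl.mpr ⟨hvw.symm, hn⟩
    by_cases hcv : (c : V) = v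
    · -- next vertex is v itself: v is adjacent to a ∈ Q
      have hadj' : Γ.Adj (a : V) v := by rw [hcv] at hadj; exact hadj
      exact Or.inr (hQ.mem_of_adj haQ hvQmem hadj')
    by_cases hcw : (c : V) = w
    · have hadj' : Γ.Adj (a : V) w := by rw [hcw] at hadj; exact hadj
      exact Or.inl (hP.mem_of_adj haP hwPmem hadj')
    by_cases hcNv : (c : V) ∈ Γ.neighborSet v
    · -- c ∈ lk v \ lk w : c lands in Q, and then v ∈ Q
      have hcNw : (c : V) ∉ Γ.neighborSet w := fun h => hcmem ⟨hcNv, h⟩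
      have hcQ : (c : V) ∈ Q := hQ.mem_of_adj haQ (mem_star_compl.mpr ⟨hcw, fun h => hcNw h⟩) hadj
      exact Or.inr (hQ.mem_of_adj hcQ hvQmem (SimpleGraph.Adj.symm (by exact hcNv)))
    by_cases hcNw : (c : V) ∈ Γ.neighborSet w
    · have hcP : (c : V) ∈ P := hP.mem_of_adj haP (mem_star_compl.mpr ⟨hcv, fun h => hcNv h⟩) hadj
      exact Or.inl (hP.mem_of_adj hcP hwPmem (SimpleGraph.Adj.symm (by exact hcNw)))
    · -- recurse
      have hcP : (c : V) ∈ P := hP.mem_of_adj haP (mem_star_compl.mpr ⟨hcv, fun h => hcNv h⟩) hadj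
      have hcQ : (c : V) ∈ Q := hQ.mem_of_adj haQ (mem_star_compl.mpr ⟨hcw, fun h => hcNw h⟩) hadj
      exact ih hcP hcQ hb

/-- Master lemma: with no SIL, for nonadjacent `v ≠ w`, a component `P` of `Γ∖st(v)`
and a component `Q` of `Γ∖st(w)` that intersect satisfy `w ∈ P` or `v ∈ Q`. -/
theorem master (hsil : ¬ HasSIL Γ) (hvw : v ≠ w) (hn : ¬ Γ.Adj v w)
    (hP : IsCompOf Γ ((star Γ v)ᶜ) P) (hQ : IsCompOf Γ ((star Γ w)ᶜ) Q)
    (hxP : x ∈ P) (hxQ : x ∈ Q) : w ∈ P ∨ v ∈ Q := by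
  have hx : x ∈ (Γ.neighborSet v ∩ Γ.neighborSet w)ᶜ := by
    intro hmem
    exact (mem_star_compl.mp (hP.subset hxP)).2 hmem.1
  obtain ⟨K, hK, hxK⟩ := exists_isCompOf_mem Γ hx
  have hvK : v ∈ K ∨ w ∈ K := by
    by_contra hc
    push_neg at hc
    exact hsil ⟨v, w, hvw, hn, K, hK, hc.1, hc.2⟩
  rcases hvK with hK' | hK'
  · obtain ⟨hx', hv', hr⟩ := hK.exists_reach hxK hK'
    obtain ⟨p⟩ := hr
    exact master_aux hvw hn hP hQ p hxP hxQ (Or.inl rfl)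
  · obtain ⟨hx', hw', hr⟩ := hK.exists_reach hxK hK'
    obtain ⟨p⟩ := hr
    exact master_aux hvw hn hP hQ p hxP hxQ (Or.inr rfl)

theorem compL2 (hsil : ¬ HasSIL Γ) (hvw : v ≠ w) (hn : ¬ Γ.Adj v w)
    (hC : IsCompOf Γ ((star Γ v)ᶜ) C) (hD : IsCompOf Γ ((star Γ w)ᶜ) D)
    (hwC : w ∉ C) (hvD : v ∉ D) (hx1 : x ∈ C) (hx2 : x ∈ D) : False := by
  rcases master hsil hvw hn hC hD hx1 hx2 with h | h
  · exact hwC h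
  · exact hvD h

private theorem walk_transfer {T : Set V} (hD : IsCompOf Γ S D) (hST : ∀ z, z ∈ D → z ∈ T)
    {a b : ↥S} (p : (Γ.induce S).Walk a b) (ha : (a : V) ∈ D) :
    ∃ hb : (b : V) ∈ D, (Γ.induce T).Reachable ⟨a, hST _ ha⟩ ⟨b, hST _ hb⟩ := by
  induction p with
  | nil => exact ⟨ha, SimpleGraph.Reachable.refl _⟩
  | @cons a c b hac q ih =>
    have hadj : Γ.Adj (a : V) (c : V) := hac
    have hcD : (c : V) ∈ D := hD.mem_of_adj ha c.2 hadj
    obtain ⟨hb, hr⟩ := ih hcD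
    refine ⟨hb, SimpleGraph.Reachable.trans ?_ hr⟩
    exact SimpleGraph.Adj.reachable (by exact hadj : (Γ.induce T).Adj ⟨a, hST _ ha⟩ ⟨c, hST _ hcD⟩)

theorem compL1 (hsil : ¬ HasSIL Γ) (hvw : v ≠ w) (hn : ¬ Γ.Adj v w)
    (hC : IsCompOf Γ ((star Γ v)ᶜ) C) (hD : IsCompOf Γ ((star Γ w)ᶜ) D)
    (hwC : w ∈ C) (hvD : v ∉ D) : D ⊆ C := by
  have hDsub : ∀ z, z ∈ D → z ∈ ((star Γ v)ᶜ : Set V) := by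
    intro d hd
    rw [mem_star_compl]
    constructor
    · rintro rfl; exact hvD hd
    · intro hadj
      exact hvD (hD.mem_of_adj hd (mem_star_compl.mpr ⟨hvw, fun h => hn h.symm⟩) hadj.symm)
  obtain ⟨d, hd⟩ := hD.nonempty
  obtain ⟨C', hC', hdC'⟩ := exists_isCompOf_mem Γ (hDsub d hd)
  have hor : w ∈ C' ∨ v ∈ D := master hsil hvw hn hC' hD hdC' hd
  rcases hor with hwC' | hvD'
  · have hCC' : C = C' := hC.eq_of_mem hC' hwC hwC'
    subst hCC'
    intro e he
    obtain ⟨hd', he', hr⟩ := hD.exists_reach hd he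
    obtain ⟨hb, hr'⟩ := walk_transfer hD hDsub hr.some hd
    exact hC.mem_of_reachable hdC' hr'
  · exact absurd hvD' hvD

/-- Existence of a coherent choice of component for every non-Delta vertex. -/
theorem exists_sel (hsil : ¬ HasSIL Γ) : ∃ sel : V → Set V,
    (∀ v, v ∉ Delta Γ → IsCompOf Γ ((star Γ v)ᶜ) (sel v) ) ∧
    (∀ v w, v ≠ w → ¬ Γ.Adj v w → w ∈ sel v ∨ v ∈ sel w) := by
  classical
  haveI := (WellOrderingRel.isWellOrder (α := V))
  have wf : WellFounded (WellOrderingRel (α := V)) := this.toIsWellFounded.wf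
  -- the minimal non-neighbor of v
  let μ : ∀ v : V, v ∉ Delta Γ → V := fun v h => wf.min ((star Γ v)ᶜ) (nonempty_star_compl h)
  have hμmem : ∀ v h, μ v h ∈ ((star Γ v)ᶜ : Set V) := fun v h =>
    wf.min_mem ((star Γ v)ᶜ) (nonempty_star_compl h)
  have hμmin : ∀ v h x, x ∈ ((star Γ v)ᶜ : Set V) → ¬ WellOrderingRel x (μ v h) := fun v h x hx =>
    wf.not_lt_min _ hx
  refine ⟨fun v => if h : v ∉ Delta Γ then
      Classical.choose (exists_isCompOf_mem Γ (hμmem v h)) else ∅, fun v h => ?_, ?_⟩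
  · simp only [dif_pos h]
    exact (Classical.choose_spec (exists_isCompOf_mem Γ (hμmem v h))).1
  · intro v w hvw hn
    have hv : v ∉ Delta Γ := by
      intro hmem
      exact hn (hmem w hvw.symm)
    have hw : w ∉ Delta Γ := by
      intro hmem
      exact hn (hmem v hvw).symm
    simp only [dif_pos hv, dif_pos hw]
    set Cv := Classical.choose (exists_isCompOf_mem Γ (hμmem v hv)) with hCv
    set Cw := Classical.choose (exists_isCompOf_mem Γ (hμmem w hw)) with hCw
    obtain ⟨hCvcomp, hμvCv⟩ := Classical.choose_spec (exists_isCompOf_mem Γ (hμmem v hv))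
    obtain ⟨hCwcomp, hμwCw⟩ := Classical.choose_spec (exists_isCompOf_mem Γ (hμmem w hw))
    by_cases hwCv : w ∈ Cv
    · exact Or.inl hwCv
    right
    -- u₀ := μ w
    by_cases hu₀v : μ w hw = v
    · exact hu₀v ▸ hμwCw
    by_cases hu₀adj : Γ.Adj v (μ w hw)
    · -- v is adjacent to μ w and both lie outside st w, hence v is in the component of μ w
      have hvmem : v ∈ ((star Γ w)ᶜ : Set V) := mem_star_compl.mpr ⟨hvw, fun h => hn h.symm⟩
      exact hCwcomp.mem_of_adj hμwCw hvmem hu₀adj.symm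
    · -- μ w is a non-neighbor of v, so by minimality μ w = μ v
      have hu₀mem : μ w hw ∈ ((star Γ v)ᶜ : Set V) := mem_star_compl.mpr ⟨hu₀v, hu₀adj⟩
      have hμvmem : μ v hv ∈ ((star Γ w)ᶜ : Set V) := by
        rw [mem_star_compl]
        constructor
        · rintro rfl; exact hwCv hμvCv
        · intro hadj
          -- then w would be in Cv
          exact hwCv (hCvcomp.mem_of_adj hμvCv (mem_star_compl.mpr ⟨hvw.symm, hn⟩) hadj.symm)
      have heq : μ w hw = μ v hv := by
        rcases trichotomous_of WellOrderingRel (μ w hw) (μ v hv) with h | h | h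
        · exact absurd h (hμmin v hv _ hu₀mem)
        · exact h
        · exact absurd h (hμmin w hw _ hμvmem)
      -- apply the master lemma at x := μ v
      have hx2 : μ v hv ∈ Cw := by rw [← heq]; exact hμwCw
      rcases master hsil hvw hn hCvcomp hCwcomp hμvCv hx2 with h | h
      · exact absurd h hwCv
      · exact h

end Combinatorics
section Ext

variable (Γ : SimpleGraph V)

/-- The graph `Γ` together with one extra isolated vertex. -/
def extG : SimpleGraph (Option V) where
  Adj x y := ∃ u w, Γ.Adj u w ∧ x = some u ∧ y = some w
  symm := ⟨by rintro x y ⟨u, w, h, rfl, rfl⟩; exact ⟨w, u, h.symm, rfl, rfl⟩⟩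
  loopless := ⟨by
    rintro x ⟨u, w, h, rfl, hw⟩
    rw [Option.some_inj] at hw
    subst hw
    exact Γ.loopless.irrefl u h⟩

@[simp] theorem extG_adj_some {u w : V} : (extG Γ).Adj (some u) (some w) ↔ Γ.Adj u w := by
  constructor
  · rintro ⟨a, b, h, ha, hb⟩
    rw [Option.some_inj] at ha hb
    subst ha; subst hb; exact h
  · intro h; exact ⟨u, w, h, rfl, rfl⟩

@[simp] theorem extG_not_adj_none_left {y : Option V} : ¬ (extG Γ).Adj none y := by
  rintro ⟨a, b, h, ha, hb⟩
  cases ha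

@[simp] theorem extG_not_adj_none_right {y : Option V} : ¬ (extG Γ).Adj y none := by
  rintro ⟨a, b, h, ha, hb⟩
  cases hb

/-- The family of vertex groups on the extended graph: the extra vertex carries `ℤ`. -/
def extFam (G : V → Type uG) : Option V → Type uG :=
  fun o => Option.elim o (ULift.{uG} (Multiplicative ℤ)) G

instance extFamGroup (G : V → Type uG) [∀ v, Group (G v)] : ∀ o, Group (extFam G o)
  | none => inferInstanceAs (Group (ULift.{uG} (Multiplicative ℤ)))
  | some v => inferInstanceAs (Group (G v))

end Ext

section PConj

variable {Γ : SimpleGraph V} {G : V → Type uG} [∀ v, Group (G v)]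
variable (gen : ∀ v, G v)

/-- Conditions on a set of vertices of the extended graph, needed for the partial
conjugation of the vertex groups in `S` by an element of `G v` to be well defined. -/
def GoodSet (Γ : SimpleGraph V) (v : V) (S : Set (Option V)) : Prop :=
  some v ∉ S ∧ ∀ x ∈ S, ∀ y ∉ S, (extG Γ).Adj x y → y = some v ∨ (extG Γ).Adj (some v) y

open Classical in
/-- Partial conjugation of the vertex groups in `S` by the element `a` of `G v`. -/
noncomputable def pconj (hgen : ∀ v, Subgroup.zpowers (gen v) = ⊤) (v : V) (a : G v)
    (S : Set (Option V)) (hS : GoodSet Γ v S) :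
    GraphProduct (extG Γ) (extFam G) →* GraphProduct (extG Γ) (extFam G) :=
  liftHom (extG Γ) (extFam G)
    (fun o => if o ∈ S then
        ((MulAut.conj (of (extG Γ) (extFam G) (v := some v) a)).toMonoidHom).comp
          (of (extG Γ) (extFam G))
      else of (extG Γ) (extFam G))
    (by
      intro o₁ o₂ hadj g k
      have hzp : ∀ x : extFam G (some v), x ∈ Subgroup.zpowers (gen v : extFam G (some v)) := by
        intro x
        have := hgen v
        rw [show (Subgroup.zpowers (gen v : extFam G (some v))) =
          Subgroup.zpowers (gen v) from rfl, this]
        exact Subgroup.mem_top x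
      have hbase : Commute (of (extG Γ) (extFam G) g) (of (extG Γ) (extFam G) k) :=
        of_commute _ _ hadj g k
      have hA : ∀ (o) (_ : o ∈ S) (o') (_ : o' ∉ S), (extG Γ).Adj o o' →
          ∀ k' : extFam G o', Commute (of (extG Γ) (extFam G) (v := some v) a)
            (of (extG Γ) (extFam G) k') := by
        intro o hmem o' hnm hadj' k'
        rcases hS.2 o hmem o' hnm hadj' with h | h
        · subst h
          exact of_comm_of_zpowers hzp a k'
        · exact of_commute _ _ h a k'
      by_cases h₁ : o₁ ∈ S <;> by_cases h₂ : o₂ ∈ S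
      · simp only [if_pos h₁, if_pos h₂, MonoidHom.comp_apply]
        exact hbase.map _
      · simp only [if_pos h₁, if_neg h₂, MonoidHom.comp_apply, MulEquiv.coe_toMonoidHom,
          MulAut.conj_apply]
        have hAk := hA o₁ h₁ o₂ h₂ hadj k
        exact (hAk.mul_left hbase).mul_left hAk.inv_left
      · simp only [if_neg h₁, if_pos h₂, MonoidHom.comp_apply, MulEquiv.coe_toMonoidHom,
          MulAut.conj_apply]
        have hAk := hA o₂ h₂ o₁ h₁ hadj.symm g
        exact ((hAk.mul_left hbase.symm).mul_left hAk.inv_left).symm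
      · simp only [if_neg h₁, if_neg h₂]
        exact hbase)

variable (hgen : ∀ v, Subgroup.zpowers (gen v) = ⊤)

theorem of_comm_same (hgen : ∀ v, Subgroup.zpowers (gen v) = ⊤) {v : V} (a b : G v) :
    Commute (of (extG Γ) (extFam G) (v := some v) a)
      (of (extG Γ) (extFam G) (v := some v) b) := by
  refine of_comm_of_zpowers (Γ' := extG Γ) (G' := extFam G) (v := some v)
    (g₀ := (gen v : extFam G (some v))) ?_ a b
  intro x
  have h := hgen v
  erw [show (Subgroup.zpowers (gen v : extFam G (some v))) =
    Subgroup.zpowers (gen v) from rfl, h]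
  exact Subgroup.mem_top x

theorem conj_mul_helper {H : Type*} [Group H] {A B g : H} (h : Commute A B) :
    B * (A * g * A⁻¹) * B⁻¹ = (A * B) * g * (A * B)⁻¹ := by
  rw [h.eq, mul_inv_rev]
  group

theorem pconj_of_mem {v : V} (a : G v) {S : Set (Option V)} (hS : GoodSet Γ v S)
    {o : Option V} (ho : o ∈ S) (g : extFam G o) :
    pconj gen hgen v a S hS (of (extG Γ) (extFam G) g) =
      of (extG Γ) (extFam G) (v := some v) a * of (extG Γ) (extFam G) g *
        (of (extG Γ) (extFam G) (v := some v) a)⁻¹ := by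
  rw [pconj, liftHom_of]
  simp only [if_pos ho, MonoidHom.comp_apply, MulEquiv.coe_toMonoidHom, MulAut.conj_apply]

theorem pconj_of_not_mem {v : V} (a : G v) {S : Set (Option V)} (hS : GoodSet Γ v S)
    {o : Option V} (ho : o ∉ S) (g : extFam G o) :
    pconj gen hgen v a S hS (of (extG Γ) (extFam G) g) = of (extG Γ) (extFam G) g := by
  rw [pconj, liftHom_of]
  simp only [if_neg ho]

theorem pconj_comp {v : V} (a b : G v) {S : Set (Option V)} (hS : GoodSet Γ v S) :
    (pconj gen hgen v a S hS).comp (pconj gen hgen v b S hS) =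
      pconj gen hgen v (a * b) S hS := by
  refine hom_ext fun o g => ?_
  by_cases ho : o ∈ S
  · erw [MonoidHom.comp_apply, pconj_of_mem gen hgen b hS ho, map_mul, map_mul, map_inv,
      pconj_of_mem gen hgen a hS ho, pconj_of_not_mem gen hgen a hS hS.1,
      pconj_of_mem gen hgen (a*b) hS ho, map_mul]
    exact conj_mul_helper (of_comm_same gen hgen a b)
  · rw [MonoidHom.comp_apply, pconj_of_not_mem gen hgen b hS ho,
      pconj_of_not_mem gen hgen a hS ho, pconj_of_not_mem gen hgen (a*b) hS ho]

theorem pconj_one {v : V} {S : Set (Option V)} (hS : GoodSet Γ v S) :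
    pconj gen hgen v (1 : G v) S hS = MonoidHom.id _ := by
  refine hom_ext fun o g => ?_
  by_cases ho : o ∈ S
  · erw [pconj_of_mem gen hgen 1 hS ho, map_one]
    simp
  · rw [pconj_of_not_mem gen hgen 1 hS ho]
    rfl

/-- Partial conjugation as an automorphism. -/
noncomputable def pconjAut (v : V) (a : G v) (S : Set (Option V)) (hS : GoodSet Γ v S) :
    MulAut (GraphProduct (extG Γ) (extFam G)) where
  toFun := pconj gen hgen v a S hS
  invFun := pconj gen hgen v a⁻¹ S hS
  left_inv x := by
    have h1 : (pconj gen hgen v a⁻¹ S hS).comp (pconj gen hgen v a S hS) = MonoidHom.id _ := by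
      rw [pconj_comp gen hgen a⁻¹ a hS, inv_mul_cancel, pconj_one gen hgen hS]
    exact DFunLike.congr_fun h1 x
  right_inv x := by
    have h1 : (pconj gen hgen v a S hS).comp (pconj gen hgen v a⁻¹ S hS) = MonoidHom.id _ := by
      rw [pconj_comp gen hgen a a⁻¹ hS, mul_inv_cancel, pconj_one gen hgen hS]
    exact DFunLike.congr_fun h1 x
  map_mul' := map_mul _

theorem pconjAut_apply {v : V} (a : G v) {S : Set (Option V)} (hS : GoodSet Γ v S) (x) :
    pconjAut gen hgen v a S hS x = pconj gen hgen v a S hS x := rfl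

/-- Partial conjugation as a homomorphism from the vertex group to the automorphism group. -/
noncomputable def pcAutHom (v : V) (S : Set (Option V)) (hS : GoodSet Γ v S) :
    G v →* MulAut (GraphProduct (extG Γ) (extFam G)) where
  toFun a := pconjAut gen hgen v a S hS
  map_one' := by
    refine MulEquiv.ext fun x => ?_
    rw [pconjAut_apply, pconj_one gen hgen hS]
    rfl
  map_mul' a b := by
    refine MulEquiv.ext fun x => ?_
    rw [MulAut.mul_apply, pconjAut_apply, pconjAut_apply, pconjAut_apply,
      ← MonoidHom.comp_apply, pconj_comp gen hgen a b hS]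

end PConj
section CommLemmas

variable {Γ : SimpleGraph V} {G : V → Type uG} [∀ v, Group (G v)]
variable (gen : ∀ v, G v) (hgen : ∀ v, Subgroup.zpowers (gen v) = ⊤)

theorem commute_of_pconj_comm {v w : V} {a : G v} {b : G w} {S T : Set (Option V)}
    {hSg : GoodSet Γ v S} {hTg : GoodSet Γ w T}
    (h : (pconj gen hgen v a S hSg).comp (pconj gen hgen w b T hTg) =
         (pconj gen hgen w b T hTg).comp (pconj gen hgen v a S hSg)) :
    Commute (pconjAut gen hgen v a S hSg) (pconjAut gen hgen w b T hTg) := by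
  refine MulEquiv.ext fun x => ?_
  have h' := DFunLike.congr_fun h x
  simp only [MonoidHom.comp_apply] at h'
  rw [MulAut.mul_apply, MulAut.mul_apply, pconjAut_apply, pconjAut_apply,
    pconjAut_apply, pconjAut_apply, h']

theorem pconjAut_comm_of_commute {v w : V} (a : G v) (b : G w) {S T : Set (Option V)}
    (hSg : GoodSet Γ v S) (hTg : GoodSet Γ w T)
    (hAB : Commute (of (extG Γ) (extFam G) (v := some v) a)
      (of (extG Γ) (extFam G) (v := some w) b)) :
    Commute (pconjAut gen hgen v a S hSg) (pconjAut gen hgen w b T hTg) := by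
  refine commute_of_pconj_comm gen hgen (hom_ext fun o g => ?_)
  have hfixB : pconj gen hgen v a S hSg (of (extG Γ) (extFam G) (v := some w) b) =
      of (extG Γ) (extFam G) (v := some w) b := by
    by_cases h : some w ∈ S
    · erw [pconj_of_mem gen hgen a hSg h, hAB.eq, mul_inv_cancel_right]
    · erw [pconj_of_not_mem gen hgen a hSg h]
  have hfixA : pconj gen hgen w b T hTg (of (extG Γ) (extFam G) (v := some v) a) =
      of (extG Γ) (extFam G) (v := some v) a := by
    by_cases h : some v ∈ T
    · erw [pconj_of_mem gen hgen b hTg h, hAB.symm.eq, mul_inv_cancel_right]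
    · erw [pconj_of_not_mem gen hgen b hTg h]
  simp only [MonoidHom.comp_apply]
  by_cases h1 : o ∈ S <;> by_cases h2 : o ∈ T
  · simp only [pconj_of_mem gen hgen b hTg h2, pconj_of_mem gen hgen a hSg h1,
      map_mul, map_inv, hfixA, hfixB]
    rw [conj_mul_helper hAB, conj_mul_helper hAB.symm, hAB.eq]
  · simp only [pconj_of_not_mem gen hgen b hTg h2, pconj_of_mem gen hgen a hSg h1,
      map_mul, map_inv, hfixA]
  · simp only [pconj_of_mem gen hgen b hTg h2, pconj_of_not_mem gen hgen a hSg h1,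
      map_mul, map_inv, hfixB]
  · simp only [pconj_of_not_mem gen hgen b hTg h2, pconj_of_not_mem gen hgen a hSg h1]

theorem pconjAut_comm_of_subset {v w : V} (a : G v) (b : G w) {S T : Set (Option V)}
    (hSg : GoodSet Γ v S) (hTg : GoodSet Γ w T)
    (hw : some w ∈ S) (hv : some v ∉ T) (hTS : T ⊆ S) :
    Commute (pconjAut gen hgen v a S hSg) (pconjAut gen hgen w b T hTg) := by
  refine commute_of_pconj_comm gen hgen (hom_ext fun o g => ?_)
  have hfixA : pconj gen hgen w b T hTg (of (extG Γ) (extFam G) (v := some v) a) =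
      of (extG Γ) (extFam G) (v := some v) a :=
    pconj_of_not_mem gen hgen b hTg hv _
  simp only [MonoidHom.comp_apply]
  by_cases h2 : o ∈ T
  · have h1 : o ∈ S := hTS h2
    simp only [pconj_of_mem gen hgen b hTg h2, pconj_of_mem gen hgen a hSg h1,
      pconj_of_mem gen hgen a hSg hw, map_mul, map_inv, hfixA]
    erw [pconj_of_mem gen hgen a hSg hw]
    group
  · by_cases h1 : o ∈ S
    · simp only [pconj_of_not_mem gen hgen b hTg h2, pconj_of_mem gen hgen a hSg h1,
        map_mul, map_inv, hfixA]
    · simp only [pconj_of_not_mem gen hgen b hTg h2, pconj_of_not_mem gen hgen a hSg h1]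

theorem pconjAut_comm_of_disjoint {v w : V} (a : G v) (b : G w) {S T : Set (Option V)}
    (hSg : GoodSet Γ v S) (hTg : GoodSet Γ w T)
    (hw : some w ∉ S) (hv : some v ∉ T) (hdisj : ∀ o, o ∈ S → o ∈ T → False) :
    Commute (pconjAut gen hgen v a S hSg) (pconjAut gen hgen w b T hTg) := by
  refine commute_of_pconj_comm gen hgen (hom_ext fun o g => ?_)
  have hfixA : pconj gen hgen w b T hTg (of (extG Γ) (extFam G) (v := some v) a) =
      of (extG Γ) (extFam G) (v := some v) a :=
    pconj_of_not_mem gen hgen b hTg hv _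
  have hfixB : pconj gen hgen v a S hSg (of (extG Γ) (extFam G) (v := some w) b) =
      of (extG Γ) (extFam G) (v := some w) b :=
    pconj_of_not_mem gen hgen a hSg hw _
  simp only [MonoidHom.comp_apply]
  by_cases h1 : o ∈ S
  · have h2 : o ∉ T := fun h => hdisj o h1 h
    simp only [pconj_of_not_mem gen hgen b hTg h2, pconj_of_mem gen hgen a hSg h1,
      map_mul, map_inv, hfixA]
  · by_cases h2 : o ∈ T
    · simp only [pconj_of_mem gen hgen b hTg h2, pconj_of_not_mem gen hgen a hSg h1,
        map_mul, map_inv, hfixB]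
    · simp only [pconj_of_not_mem gen hgen b hTg h2, pconj_of_not_mem gen hgen a hSg h1]

end CommLemmas

section SSets

variable {Γ : SimpleGraph V} {G : V → Type uG} [∀ v, Group (G v)]
variable (gen : ∀ v, G v) (hgen : ∀ v, Subgroup.zpowers (gen v) = ⊤)

/-- The set of vertices of the extended graph moved by the partial conjugation attached
to the vertex `p = (v, C)` of `Γ̃` : the vertices of `C`, together with the extra vertex
in case `C` is the selected component of `v`. -/
def SS (sel : V → Set V) (p : TV Γ) : Set (Option V) :=
  (some '' p.1.2) ∪ {o : Option V | o = none ∧ p.1.2 = sel p.1.1}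

theorem mem_SS_some {sel : V → Set V} {p : TV Γ} {x : V} :
    some x ∈ SS sel p ↔ x ∈ p.1.2 := by
  simp [SS]

theorem mem_SS_none {sel : V → Set V} {p : TV Γ} :
    none ∈ SS sel p ↔ p.1.2 = sel p.1.1 := by
  simp [SS]

theorem goodSS (sel : V → Set V) (p : TV Γ) : GoodSet Γ p.1.1 (SS sel p) := by
  constructor
  · intro h
    exact (mem_star_compl.mp (p.2.subset (mem_SS_some.mp h))).1 rfl
  · intro x hx y hy hadj
    match x with
    | none => exact absurd hadj (extG_not_adj_none_left Γ)
    | some c =>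
      have hc : c ∈ p.1.2 := mem_SS_some.mp hx
      match y with
      | none => exact absurd hadj (extG_not_adj_none_right Γ)
      | some u =>
        have hadj' : Γ.Adj c u := (extG_adj_some Γ).mp hadj
        have hu : u ∉ p.1.2 := fun h => hy (mem_SS_some.mpr h)
        by_cases hstar : u ∈ ((star Γ p.1.1)ᶜ : Set V)
        · exact absurd (p.2.mem_of_adj hc hstar hadj') hu
        · simp only [Set.mem_compl_iff, not_not] at hstar
          rcases Set.mem_insert_iff.mp hstar with h | h
          · exact Or.inl (by rw [h])
          · exact Or.inr ((extG_adj_some Γ).mpr h)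

theorem tilde_comm (sel : V → Set V) (hsil : ¬ HasSIL Γ)
    (hsel1 : ∀ v, v ∉ Delta Γ → IsCompOf Γ ((star Γ v)ᶜ) (sel v))
    (hsel2 : ∀ v w, v ≠ w → ¬ Γ.Adj v w → w ∈ sel v ∨ v ∈ sel w) :
    ∀ p q : TV Γ, (tilde Γ).Adj p q → ∀ (a : G p.1.1) (b : G q.1.1),
      Commute (pconjAut gen hgen p.1.1 a (SS sel p) (goodSS sel p))
        (pconjAut gen hgen q.1.1 b (SS sel q) (goodSS sel q)) := by
  rintro ⟨⟨v, C⟩, hC⟩ ⟨⟨w, D⟩, hD⟩ ⟨hne, hnot⟩ a b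
  dsimp only at a b hC hD hnot ⊢
  by_cases hvw : v = w
  · subst hvw
    exact pconjAut_comm_of_commute gen hgen a b _ _ (of_comm_same gen hgen a b)
  by_cases hadj2 : Γ.Adj v w
  · exact pconjAut_comm_of_commute gen hgen a b _ _
      (of_commute (extG Γ) (extFam G) ((extG_adj_some Γ).mpr hadj2) a b)
  have hvnd : v ∉ Delta Γ := fun hmem => hadj2 (hmem w (Ne.symm hvw))
  have hwnd : w ∉ Delta Γ := fun hmem => hadj2 ((hmem v hvw).symm)
  have hnot' : ¬ (v ∈ D ∧ w ∈ C) := fun hh => hnot ⟨hvw, hadj2, hh.1, hh.2⟩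
  by_cases hwC : w ∈ C <;> by_cases hvD : v ∈ D
  · exact absurd ⟨hvD, hwC⟩ hnot'
  · -- w ∈ C, v ∉ D : SS q ⊆ SS p
    refine pconjAut_comm_of_subset gen hgen a b _ _ (mem_SS_some.mpr hwC)
      (fun h => hvD (mem_SS_some.mp h)) ?_
    intro o ho
    match o with
    | some d =>
      exact mem_SS_some.mpr (compL1 hsil hvw hadj2 hC hD hwC hvD (mem_SS_some.mp ho))
    | none =>
      have hDsel : D = sel w := mem_SS_none.mp ho
      rcases hsel2 v w hvw hadj2 with h | h
      · exact mem_SS_none.mpr (hC.eq_of_mem (hsel1 v hvnd) hwC h)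
      · exact absurd (hDsel ▸ h) hvD
  · -- w ∉ C, v ∈ D : SS p ⊆ SS q
    refine (pconjAut_comm_of_subset gen hgen b a _ _ (mem_SS_some.mpr hvD)
      (fun h => hwC (mem_SS_some.mp h)) ?_).symm
    intro o ho
    match o with
    | some c =>
      exact mem_SS_some.mpr
        (compL1 hsil (Ne.symm hvw) (fun h => hadj2 h.symm) hD hC hvD hwC (mem_SS_some.mp ho))
    | none =>
      have hCsel : C = sel v := mem_SS_none.mp ho
      rcases hsel2 v w hvw hadj2 with h | h
      · exact absurd (hCsel ▸ h) hwC
      · exact mem_SS_none.mpr (hD.eq_of_mem (hsel1 w hwnd) hvD h)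
  · -- disjoint
    refine pconjAut_comm_of_disjoint gen hgen a b _ _
      (fun h => hwC (mem_SS_some.mp h)) (fun h => hvD (mem_SS_some.mp h)) ?_
    intro o h1 h2
    match o with
    | some x =>
      exact compL2 hsil hvw hadj2 hC hD hwC hvD (mem_SS_some.mp h1) (mem_SS_some.mp h2)
    | none =>
      have hCsel : C = sel v := mem_SS_none.mp h1
      have hDsel : D = sel w := mem_SS_none.mp h2
      rcases hsel2 v w hvw hadj2 with h | h
      · exact hwC (hCsel ▸ h)
      · exact hvD (hDsel ▸ h)

/-- The homomorphism `G_{Γ̃} → Aut(G_{Γ⁺})` sending `p_{v,C}` to the partial conjugation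
`π_{v,C}` (extended over the extra vertex for selected components). -/
noncomputable def Phi (sel : V → Set V) (hsil : ¬ HasSIL Γ)
    (hsel1 : ∀ v, v ∉ Delta Γ → IsCompOf Γ ((star Γ v)ᶜ) (sel v))
    (hsel2 : ∀ v w, v ≠ w → ¬ Γ.Adj v w → w ∈ sel v ∨ v ∈ sel w) :
    TildeProduct Γ G →* MulAut (GraphProduct (extG Γ) (extFam G)) :=
  liftHom (tilde Γ) (fun p : TV Γ => G p.1.1)
    (fun p => pcAutHom gen hgen p.1.1 (SS sel p) (goodSS sel p))
    (tilde_comm gen hgen sel hsil hsel1 hsel2)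

theorem Phi_of (sel : V → Set V) (hsil : ¬ HasSIL Γ) (hsel1) (hsel2) (p : TV Γ)
    (a : G p.1.1) :
    Phi gen hgen sel hsil hsel1 hsel2 (of (tilde Γ) (fun p : TV Γ => G p.1.1) (v := p) a) =
      pconjAut gen hgen p.1.1 a (SS sel p) (goodSS sel p) := by
  erw [Phi, liftHom_of]
  rfl

end SSets
section Eval

variable {Γ : SimpleGraph V} {G : V → Type uG} [∀ v, Group (G v)]
variable (gen : ∀ v, G v) (hgen : ∀ v, Subgroup.zpowers (gen v) = ⊤)

theorem SS_disjoint {sel : V → Set V} {u : V}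
    {c d : {C : Set V // IsCompOf Γ ((star Γ u)ᶜ) C}} (hne : c ≠ d) {o : Option V}
    (h1 : o ∈ SS sel (⟨(u, c.1), c.2⟩ : TV Γ)) (h2 : o ∈ SS sel (⟨(u, d.1), d.2⟩ : TV Γ)) :
    False := by
  match o with
  | some x =>
    exact hne (Subtype.ext (c.2.eq_of_mem d.2 (mem_SS_some.mp h1) (mem_SS_some.mp h2)))
  | none =>
    have hc : c.1 = sel u := mem_SS_none.mp h1
    have hd : d.1 = sel u := mem_SS_none.mp h2
    exact hne (Subtype.ext (hc.trans hd.symm))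

open Classical in
theorem noncommProd_pconjAut_apply (sel : V → Set V) (u : V)
    (s : Finset {C : Set V // IsCompOf Γ ((star Γ u)ᶜ) C}) :
    ∀ (hcomm : (↑s : Set {C : Set V // IsCompOf Γ ((star Γ u)ᶜ) C}).Pairwise fun c d =>
        Commute
          (pconjAut gen hgen u (gen u) (SS sel (⟨(u, c.1), c.2⟩ : TV Γ)) (goodSS sel _))
          (pconjAut gen hgen u (gen u) (SS sel (⟨(u, d.1), d.2⟩ : TV Γ)) (goodSS sel _)))
      (o : Option V) (g : extFam G o),
      (s.noncommProd (fun c => pconjAut gen hgen u (gen u)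
          (SS sel (⟨(u, c.1), c.2⟩ : TV Γ)) (goodSS sel _)) hcomm)
        (of (extG Γ) (extFam G) g) =
      if ∃ c ∈ s, o ∈ SS sel (⟨(u, c.1), c.2⟩ : TV Γ) then
        of (extG Γ) (extFam G) (v := some u) (gen u) * of (extG Γ) (extFam G) g *
          (of (extG Γ) (extFam G) (v := some u) (gen u))⁻¹
      else of (extG Γ) (extFam G) g := by
  classical
  induction s using Finset.induction_on with
  | empty =>
    intro hcomm o g
    rw [Finset.noncommProd_empty, if_neg (by rintro ⟨c, hc, -⟩; exact absurd hc (Finset.notMem_empty c))]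
    rfl
  | @insert c s hc ih =>
    intro hcomm o g
    rw [Finset.noncommProd_insert_of_notMem _ _ _ _ hc, MulAut.mul_apply, ih _ o g]
    by_cases hmem : ∃ d ∈ s, o ∈ SS sel (⟨(u, d.1), d.2⟩ : TV Γ)
    · rw [if_pos hmem, if_pos (by
        obtain ⟨d, hd, hod⟩ := hmem
        exact ⟨d, Finset.mem_insert_of_mem hd, hod⟩)]
      obtain ⟨d, hd, hod⟩ := hmem
      have hoc : o ∉ SS sel (⟨(u, c.1), c.2⟩ : TV Γ) := fun h =>
        SS_disjoint (fun he => hc (by rw [he]; exact hd)) h hod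
      erw [pconjAut_apply, map_mul, map_mul, map_inv,
        pconj_of_not_mem gen hgen (gen u) (goodSS sel _) (goodSS sel _).1,
        pconj_of_not_mem gen hgen (gen u) (goodSS sel _) hoc]
    · rw [if_neg hmem]
      by_cases hoc : o ∈ SS sel (⟨(u, c.1), c.2⟩ : TV Γ)
      · rw [if_pos ⟨c, Finset.mem_insert_self c s, hoc⟩, pconjAut_apply,
          pconj_of_mem gen hgen (gen u) (goodSS sel _) hoc]
      · rw [if_neg (by
          rintro ⟨d, hd, hod⟩
          rcases Finset.mem_insert.mp hd with rfl | hd'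
          · exact hoc hod
          · exact hmem ⟨d, hd', hod⟩), pconjAut_apply,
          pconj_of_not_mem gen hgen (gen u) (goodSS sel _) hoc]

theorem Phi_of' (sel : V → Set V) (hsil : ¬ HasSIL Γ)
    (hsel1 : ∀ v, v ∉ Delta Γ → IsCompOf Γ ((star Γ v)ᶜ) (sel v))
    (hsel2 : ∀ v w, v ≠ w → ¬ Γ.Adj v w → w ∈ sel v ∨ v ∈ sel w)
    (u : V) (c : {C : Set V // IsCompOf Γ ((star Γ u)ᶜ) C}) :
    Phi gen hgen sel hsil hsel1 hsel2
        (of (tilde Γ) (fun p : TV Γ => G p.1.1) (v := ⟨(u, c.1), c.2⟩) (gen u)) =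
      pconjAut gen hgen u (gen u) (SS sel (⟨(u, c.1), c.2⟩ : TV Γ)) (goodSS sel _) :=
  Phi_of gen hgen sel hsil hsel1 hsel2 (⟨(u, c.1), c.2⟩ : TV Γ) (gen u)

open Classical in
theorem Phi_noncommProd (sel : V → Set V) (hsil : ¬ HasSIL Γ)
    (hsel1 : ∀ v, v ∉ Delta Γ → IsCompOf Γ ((star Γ v)ᶜ) (sel v))
    (hsel2 : ∀ v w, v ≠ w → ¬ Γ.Adj v w → w ∈ sel v ∨ v ∈ sel w)
    (u : V) (hu : u ∉ Delta Γ)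
    [inst : Fintype {C : Set V // IsCompOf Γ ((star Γ u)ᶜ) C}]
    (hcomm : ((Finset.univ : Finset {C : Set V // IsCompOf Γ ((star Γ u)ᶜ) C}) :
        Set {C : Set V // IsCompOf Γ ((star Γ u)ᶜ) C}).Pairwise fun c d =>
        Commute (of (tilde Γ) (fun p : TV Γ => G p.1.1) (v := ⟨(u, c.1), c.2⟩) (gen u))
          (of (tilde Γ) (fun p : TV Γ => G p.1.1) (v := ⟨(u, d.1), d.2⟩) (gen u))) :
    Phi gen hgen sel hsil hsel1 hsel2
        (Finset.univ.noncommProd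
          (fun c : {C : Set V // IsCompOf Γ ((star Γ u)ᶜ) C} =>
            of (tilde Γ) (fun p : TV Γ => G p.1.1) (v := ⟨(u, c.1), c.2⟩) (gen u)) hcomm) =
      MulAut.conj (of (extG Γ) (extFam G) (v := some u) (gen u)) := by
  have hcomm' : ((Finset.univ : Finset {C : Set V // IsCompOf Γ ((star Γ u)ᶜ) C}) :
      Set {C : Set V // IsCompOf Γ ((star Γ u)ᶜ) C}).Pairwise fun c d =>
      Commute
        (pconjAut gen hgen u (gen u) (SS sel (⟨(u, c.1), c.2⟩ : TV Γ)) (goodSS sel _))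
        (pconjAut gen hgen u (gen u) (SS sel (⟨(u, d.1), d.2⟩ : TV Γ)) (goodSS sel _)) :=
    fun a _ b _ _ => pconjAut_comm_of_commute gen hgen (gen u) (gen u) _ _
      (of_comm_same gen hgen (gen u) (gen u))
  have h1 : Phi gen hgen sel hsil hsel1 hsel2
      (Finset.univ.noncommProd
        (fun c : {C : Set V // IsCompOf Γ ((star Γ u)ᶜ) C} =>
          of (tilde Γ) (fun p : TV Γ => G p.1.1) (v := ⟨(u, c.1), c.2⟩) (gen u)) hcomm) =
      Finset.univ.noncommProd
        (fun c : {C : Set V // IsCompOf Γ ((star Γ u)ᶜ) C} =>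
          pconjAut gen hgen u (gen u) (SS sel (⟨(u, c.1), c.2⟩ : TV Γ)) (goodSS sel _))
        hcomm' := by
    rw [Finset.map_noncommProd]
    exact Finset.noncommProd_congr rfl
      (fun c _ => Phi_of' gen hgen sel hsil hsel1 hsel2 u c) _
  rw [h1]
  refine MulEquiv.toMonoidHom_injective (hom_ext fun o g => ?_)
  show _ = (MulAut.conj (of (extG Γ) (extFam G) (v := some u) (gen u)))
    (of (extG Γ) (extFam G) g)
  rw [MulAut.conj_apply]
  have heval := noncommProd_pconjAut_apply gen hgen sel u Finset.univ hcomm' o g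
  rw [show ((Finset.univ.noncommProd
        (fun c : {C : Set V // IsCompOf Γ ((star Γ u)ᶜ) C} =>
          pconjAut gen hgen u (gen u) (SS sel (⟨(u, c.1), c.2⟩ : TV Γ)) (goodSS sel _))
        hcomm').toMonoidHom) (of (extG Γ) (extFam G) g) =
      (Finset.univ.noncommProd
        (fun c : {C : Set V // IsCompOf Γ ((star Γ u)ᶜ) C} =>
          pconjAut gen hgen u (gen u) (SS sel (⟨(u, c.1), c.2⟩ : TV Γ)) (goodSS sel _))
        hcomm') (of (extG Γ) (extFam G) g) from rfl, heval]
  by_cases hog : ∃ c : {C : Set V // IsCompOf Γ ((star Γ u)ᶜ) C},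
      c ∈ (Finset.univ : Finset {C : Set V // IsCompOf Γ ((star Γ u)ᶜ) C}) ∧
        o ∈ SS sel (⟨(u, c.1), c.2⟩ : TV Γ)
  · rw [if_pos (by obtain ⟨c, hcu, hoc⟩ := hog; exact ⟨c, hcu, hoc⟩)]
  · rw [if_neg (by rintro ⟨c, hcu, hoc⟩; exact hog ⟨c, hcu, hoc⟩)]
    have hcommA : Commute (of (extG Γ) (extFam G) (v := some u) (gen u))
        (of (extG Γ) (extFam G) g) := by
      match o with
      | none =>
        exact absurd ⟨⟨sel u, hsel1 u hu⟩, Finset.mem_univ _, mem_SS_none.mpr rfl⟩ hog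
      | some x =>
        by_cases hx : x ∈ ((star Γ u)ᶜ : Set V)
        · obtain ⟨C, hCc, hxC⟩ := exists_isCompOf_mem Γ hx
          exact absurd ⟨⟨C, hCc⟩, Finset.mem_univ _, mem_SS_some.mpr hxC⟩ hog
        · simp only [Set.mem_compl_iff, not_not] at hx
          rcases Set.mem_insert_iff.mp hx with h | h
          · subst h
            exact of_comm_same gen hgen (gen x) g
          · exact of_commute _ _ ((extG_adj_some Γ).mpr h) (gen u) g
    rw [hcommA.eq, mul_inv_cancel_right]

end Eval

section Assemble

variable (Γ : SimpleGraph V) (G : V → Type uG) [∀ v, Group (G v)]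

/-- The canonical map `G_{Γ₀} → G_{Γ⁺}`. -/
noncomputable def iota :
    GraphProduct (Γ.induce (Delta Γ)ᶜ) (fun u : ↥(Delta Γ)ᶜ => G u.1) →*
      GraphProduct (extG Γ) (extFam G) :=
  liftHom _ _ (fun u => of (extG Γ) (extFam G) (v := some u.1))
    (by
      intro u w hadj g k
      exact of_commute (extG Γ) (extFam G) ((extG_adj_some Γ).mpr (by exact hadj)) g k)

/-- The two-factor family: `G_{Γ₀}` and `ℤ`. -/
@[reducible] def BF : Bool → Type (max u uG) :=
  fun b => match b with
  | false => GraphProduct (Γ.induce (Delta Γ)ᶜ) (fun u : ↥(Delta Γ)ᶜ => G u.1)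
  | true => ULift.{max u uG} (Multiplicative ℤ)

instance : ∀ b, Group (BF Γ G b) := fun b =>
  match b with
  | false => inferInstanceAs
      (Group (GraphProduct (Γ.induce (Delta Γ)ᶜ) (fun u : ↥(Delta Γ)ᶜ => G u.1)))
  | true => inferInstanceAs (Group (ULift (Multiplicative ℤ)))

open Classical in
/-- The splitting `G_{Γ⁺} → G_{Γ₀} * ℤ` killing the `Δ` vertex groups. -/
noncomputable def psi : GraphProduct (extG Γ) (extFam G) →* CoprodI (BF Γ G) :=
  liftHom _ _
    (fun o => match o with
      | none => (CoprodI.of (M := BF Γ G) (i := true)).comp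
          (((MulEquiv.ulift (α := Multiplicative ℤ)).symm.toMonoidHom).comp
            (MulEquiv.ulift (α := Multiplicative ℤ)).toMonoidHom)
      | some v => if h : v ∈ Delta Γ then 1 else
          (CoprodI.of (M := BF Γ G) (i := false)).comp
            (of (Γ.induce (Delta Γ)ᶜ) (fun u : ↥(Delta Γ)ᶜ => G u.1) (v := ⟨v, h⟩)))
    (by
      intro o₁ o₂ hadj g k
      match o₁, o₂ with
      | none, _ => exact absurd hadj (extG_not_adj_none_left Γ)
      | some v, none => exact absurd hadj (extG_not_adj_none_right Γ)
      | some v, some w =>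
        have hadj' : Γ.Adj v w := (extG_adj_some Γ).mp hadj
        dsimp only
        by_cases h1 : v ∈ Delta Γ
        · rw [dif_pos h1]
          exact Commute.one_left _
        · by_cases h2 : w ∈ Delta Γ
          · rw [dif_pos h2]
            exact Commute.one_right _
          · rw [dif_neg h1, dif_neg h2]
            erw [MonoidHom.comp_apply, MonoidHom.comp_apply]
            exact (of_commute (Γ.induce (Delta Γ)ᶜ) (fun u : ↥(Delta Γ)ᶜ => G u.1)
              (by exact hadj' : (Γ.induce (Delta Γ)ᶜ).Adj ⟨v, h1⟩ ⟨w, h2⟩) g k).map _)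

open Classical in
theorem psi_iota :
    (psi Γ G).comp (iota Γ G) =
      (CoprodI.of (M := BF Γ G) (i := false) :
        GraphProduct (Γ.induce (Delta Γ)ᶜ) (fun u : ↥(Delta Γ)ᶜ => G u.1) →*
          CoprodI (BF Γ G)) := by
  refine hom_ext fun u g => ?_
  rw [MonoidHom.comp_apply]
  have h1 : iota Γ G (of (Γ.induce (Delta Γ)ᶜ) (fun x : ↥(Delta Γ)ᶜ => G x.1) g) =
      of (extG Γ) (extFam G) (v := some u.1) (g : extFam G (some u.1)) := by
    rw [iota]
    exact liftHom_of (Γ' := Γ.induce (Delta Γ)ᶜ) (G' := fun x : ↥(Delta Γ)ᶜ => G x.1) g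
  rw [h1]
  have h2 : psi Γ G (of (extG Γ) (extFam G) (v := some u.1) (g : extFam G (some u.1))) =
      (if h : u.1 ∈ Delta Γ then (1 : G u.1 →* CoprodI (BF Γ G)) else
        (CoprodI.of (M := BF Γ G) (i := false)).comp
          (of (Γ.induce (Delta Γ)ᶜ) (fun x : ↥(Delta Γ)ᶜ => G x.1) (v := ⟨u.1, h⟩))) g := by
    rw [psi]
    exact liftHom_of (Γ' := extG Γ) (G' := extFam G) (v := some u.1) (g : extFam G (some u.1))
  rw [h2, dif_neg (u.2 : u.1 ∉ Delta Γ)]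
  rfl

theorem coprodI_of_commute_eq_one {ι : Type*} {M : ι → Type*} [∀ i, Group (M i)]
    {i j : ι} (hij : i ≠ j) {a : M i} {b : M j} (hb : b ≠ 1)
    (h : Commute (CoprodI.of a) (CoprodI.of b)) : a = 1 := by
  classical
  by_contra ha
  have hchain1 : List.Chain' (fun l l' : Σ i, M i => Sigma.fst l ≠ Sigma.fst l')
      [⟨i, a⟩, ⟨j, b⟩] := List.isChain_pair.mpr hij
  have hchain2 : List.Chain' (fun l l' : Σ i, M i => Sigma.fst l ≠ Sigma.fst l')
      [⟨j, b⟩, ⟨i, a⟩] := List.isChain_pair.mpr hij.symm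
  have hone1 : ∀ l ∈ ([⟨i, a⟩, ⟨j, b⟩] : List (Σ i, M i)), Sigma.snd l ≠ 1 := by
    rintro l hl
    rcases List.mem_pair.mp hl with rfl | rfl
    · exact ha
    · exact hb
  have hone2 : ∀ l ∈ ([⟨j, b⟩, ⟨i, a⟩] : List (Σ i, M i)), Sigma.snd l ≠ 1 := by
    rintro l hl
    rcases List.mem_pair.mp hl with rfl | rfl
    · exact hb
    · exact ha
  let w₁ : CoprodI.Word M := ⟨[⟨i, a⟩, ⟨j, b⟩], hone1, hchain1⟩
  let w₂ : CoprodI.Word M := ⟨[⟨j, b⟩, ⟨i, a⟩], hone2, hchain2⟩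
  have hp1 : w₁.prod = CoprodI.of a * CoprodI.of b := by
    simp [w₁, CoprodI.Word.prod]
  have hp2 : w₂.prod = CoprodI.of b * CoprodI.of a := by
    simp [w₂, CoprodI.Word.prod]
  have hprod : (CoprodI.Word.equiv (M := M)).symm w₁ = (CoprodI.Word.equiv (M := M)).symm w₂ := by
    show w₁.prod = w₂.prod
    rw [hp1, hp2, h.eq]
  have hw : w₁ = w₂ := (CoprodI.Word.equiv (M := M)).symm.injective hprod
  have hlist : ([⟨i, a⟩, ⟨j, b⟩] : List (Σ i, M i)) = [⟨j, b⟩, ⟨i, a⟩] :=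
    congrArg CoprodI.Word.toList hw
  have : (⟨i, a⟩ : Σ i, M i) = ⟨j, b⟩ := by
    injection hlist
  exact hij (congrArg Sigma.fst this)

end Assemble
section Theta

variable {Γ : SimpleGraph V} {G : V → Type uG} [∀ v, Group (G v)]
variable (gen : ∀ v, G v) (hgen : ∀ v, Subgroup.zpowers (gen v) = ⊤)

theorem theta [Finite V] (sel : V → Set V) (hsil : ¬ HasSIL Γ)
    (hsel1 : ∀ v, v ∉ Delta Γ → IsCompOf Γ ((star Γ v)ᶜ) (sel v))
    (hsel2 : ∀ v w, v ≠ w → ¬ Γ.Adj v w → w ∈ sel v ∨ v ∈ sel w)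
    (f : GraphProduct (Γ.induce (Delta Γ)ᶜ) (fun u : ↥(Delta Γ)ᶜ => G u.1) →*
      TildeProduct Γ G)
    (hf : ∀ u : ↥(Delta Γ)ᶜ,
      f (of (Γ.induce (Delta Γ)ᶜ) (fun x : ↥(Delta Γ)ᶜ => G x.1) (v := u) (gen u.1)) =
        pvert Γ G gen u.1) :
    (Phi gen hgen sel hsil hsel1 hsel2).comp f =
      (MulAut.conj (G := GraphProduct (extG Γ) (extFam G))).comp (iota Γ G) := by
  refine hom_ext fun u g => ?_
  have hg : g ∈ Subgroup.zpowers (gen u.1) := by rw [hgen u.1]; exact Subgroup.mem_top g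
  obtain ⟨n, rfl⟩ := Subgroup.mem_zpowers_iff.mp hg
  simp only [MonoidHom.comp_apply, map_zpow]
  congr 1
  rw [hf u]
  have hio : iota Γ G (of (Γ.induce (Delta Γ)ᶜ) (fun x : ↥(Delta Γ)ᶜ => G x.1) (v := u)
      (gen u.1)) = of (extG Γ) (extFam G) (v := some u.1) (gen u.1) := by
    rw [iota]
    exact liftHom_of (Γ' := Γ.induce (Delta Γ)ᶜ) (G' := fun x : ↥(Delta Γ)ᶜ => G x.1) (gen u.1)
  rw [hio]
  exact Phi_noncommProd gen hgen sel hsil hsel1 hsel2 u.1 u.2 (inst := Fintype.ofFinite _) _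

end Theta
/-- The homomorphism `f̃ : G_{Γ₀} → G_{Γ̃}` determined by `v ↦ p_v` is
injective. -/
theorem ftilde_injective {V : Type u} [Finite V] (Γ : SimpleGraph V)
    (hconn : Γ.Connected) (hsil : ¬ HasSIL Γ)
    (G : V → Type uG) [∀ v, Group (G v)] [∀ v, Nontrivial (G v)]
    (gen : ∀ v, G v) (hgen : ∀ v, Subgroup.zpowers (gen v) = ⊤)
    (f : GraphProduct (Γ.induce (Delta Γ)ᶜ) (fun u : ↥(Delta Γ)ᶜ => G u.1) →*
      TildeProduct Γ G)
    (hf : ∀ u : ↥(Delta Γ)ᶜ,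
      f (of (Γ.induce (Delta Γ)ᶜ) (fun x : ↥(Delta Γ)ᶜ => G x.1) (v := u) (gen u.1)) =
        pvert Γ G gen u.1) :
    Function.Injective f := by
  classical
  obtain ⟨sel, hsel1, hsel2⟩ := exists_sel hsil
  have key : ∀ x, f x = 1 → x = 1 := by
    intro x hx
    have hθ := theta gen hgen sel hsil hsel1 hsel2 f hf
    have h1 : MulAut.conj (iota Γ G x) = 1 := by
      have h2 := DFunLike.congr_fun hθ x
      simp only [MonoidHom.comp_apply] at h2
      rw [← h2, hx, map_one]
    set ζ : GraphProduct (extG Γ) (extFam G) :=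
      of (extG Γ) (extFam G) (v := (none : Option V))
        (ULift.up (Multiplicative.ofAdd (1 : ℤ)) : extFam G none) with hζ
    have h3 : iota Γ G x * ζ * (iota Γ G x)⁻¹ = ζ := by
      have h4 : MulAut.conj (iota Γ G x) ζ = (1 : MulAut _) ζ := by rw [h1]
      simpa [MulAut.conj_apply] using h4
    have hcomm : Commute (iota Γ G x) ζ := by
      show iota Γ G x * ζ = ζ * iota Γ G x
      calc iota Γ G x * ζ = (iota Γ G x * ζ * (iota Γ G x)⁻¹) * iota Γ G x := by group
        _ = ζ * iota Γ G x := by rw [h3]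
    have h5 : psi Γ G (iota Γ G x) = CoprodI.of (M := BF Γ G) (i := false) x := by
      have h := DFunLike.congr_fun (psi_iota (Γ := Γ) (G := G)) x
      simpa using h
    have h6 : psi Γ G ζ = CoprodI.of (M := BF Γ G) (i := true)
        (ULift.up (Multiplicative.ofAdd (1 : ℤ))) := by
      rw [hζ, psi]
      rw [liftHom_of (Γ' := extG Γ) (G' := extFam G) (v := (none : Option V))
        (ULift.up (Multiplicative.ofAdd (1 : ℤ)) : extFam G none)]
      rfl
    have h7 : Commute (CoprodI.of (M := BF Γ G) (i := false) x)
        (CoprodI.of (M := BF Γ G) (i := true) (ULift.up (Multiplicative.ofAdd (1 : ℤ)))) := by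
      have h := hcomm.map (psi Γ G)
      rwa [h5, h6] at h
    have hb : (ULift.up (Multiplicative.ofAdd (1 : ℤ)) : BF Γ G true) ≠ 1 := by
      intro hcon
      have h := congrArg (fun z : BF Γ G true => Multiplicative.toAdd z.down) hcon
      simpa using h
    exact coprodI_of_commute_eq_one (by simp : (false : Bool) ≠ true) hb h7
  intro a b hab
  have h8 : f (a * b⁻¹) = 1 := by rw [map_mul, map_inv, hab, mul_inv_cancel]
  exact mul_inv_eq_one.mp (key _ h8)

end ArXiv
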